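/- The 2×2 matrix J(a) = c·[[-2cos a - cos(a/2), 0],[-cos a + cos(a/2), -2cos(a/2) - cos(a/2)]] obtained by substituting b = a/2 into J(a,b) = c·[[-2cos a - cos(a-b), -cos b + cos(a-b)],[-cos a + cos(a-b), -2cos b - cos(a-b)]] is lower triangular with diagonal entries c·(-2cos a - cos(a/2)) and -3c·cos(a/2), and both are negative for |a| < χ and c > 0; hence both eigenvalues of J are negative. -/
import Mathlib


open Real Matrix

theorem jacobian_triangular_neg_eigenvalues
    (c a χ : ℝ) (hc : 0 < c)
    (hχ : χ = 2 * arccos ((-1 + Real.sqrt 33) / 8))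
    (ha : |a| < χ) :
    let J : Matrix (Fin 2) (Fin 2) ℝ :=
      c • !![-2 * cos a - cos (a - a / 2), -cos (a / 2) + cos (a - a / 2);
             -cos a + cos (a - a / 2), -2 * cos (a / 2) - cos (a - a / 2)]
    J 0 1 = 0 ∧
    J 0 0 = c * (-2 * cos a - cos (a / 2)) ∧
    J 1 1 = -3 * c * cos (a / 2) ∧
    J 0 0 < 0 ∧ J 1 1 < 0 ∧
    ∀ μ : ℝ, Module.End.HasEigenvalue (Matrix.toLin' J) μ → μ < 0 := by
  intro J
  set t : ℝ := (-1 + Real.sqrt 33) / 8 with ht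
  have h33 : (5:ℝ) < Real.sqrt 33 := by
    nlinarith [Real.sq_sqrt (by norm_num : (33:ℝ) ≥ 0), Real.sqrt_nonneg 33]
  have h33' : Real.sqrt 33 < 6 := by
    nlinarith [Real.sq_sqrt (by norm_num : (33:ℝ) ≥ 0), Real.sqrt_nonneg 33]
  have ht0 : 0 < t := by rw [ht]; linarith
  have ht1 : t < 1 := by rw [ht]; linarith
  -- cos (a/2) > t
  have hhalf : |a / 2| < arccos t := by
    rw [hχ] at ha
    rw [abs_div]
    rw [abs_of_nonneg (by norm_num : (0:ℝ) ≤ 2)]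
    linarith [abs_nonneg a]
  have hcos : t < cos (a / 2) := by
    have h1 : cos (arccos t) < cos |a / 2| :=
      Real.cos_lt_cos_of_nonneg_of_le_pi (abs_nonneg _) (Real.arccos_le_pi t) hhalf
    rw [Real.cos_arccos (by linarith) (by linarith), Real.cos_abs] at h1
    exact h1
  have hcospos : 0 < cos (a / 2) := lt_trans ht0 hcos
  -- key: 2 cos a + cos (a/2) > 0
  have hda : cos a = 2 * cos (a / 2) ^ 2 - 1 := by
    have h := Real.cos_sq (a / 2)
    rw [show (2:ℝ) * (a / 2) = a by ring] at h
    linarith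
  have ht2 : 4 * t ^ 2 + t - 2 = 0 := by
    rw [ht]
    have : Real.sqrt 33 ^ 2 = 33 := Real.sq_sqrt (by norm_num)
    nlinarith [this]
  have hkey : 0 < 2 * cos a + cos (a / 2) := by
    have : 2 * cos a + cos (a / 2) = 4 * cos (a/2) ^ 2 + cos (a/2) - 2 := by
      rw [hda]; ring
    rw [this]
    nlinarith [hcos, ht0, ht2]
  have haa : a - a / 2 = a / 2 := by ring
  have hJ01 : J 0 1 = 0 := by
    show c * (-cos (a / 2) + cos (a - a / 2)) = 0
    rw [haa]; ring
  have hJ00 : J 0 0 = c * (-2 * cos a - cos (a / 2)) := by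
    show c * (-2 * cos a - cos (a - a / 2)) = _
    rw [haa]
  have hJ11 : J 1 1 = -3 * c * cos (a / 2) := by
    show c * (-2 * cos (a / 2) - cos (a - a / 2)) = _
    rw [haa]; ring
  have hJ00neg : J 0 0 < 0 := by
    rw [hJ00]; nlinarith
  have hJ11neg : J 1 1 < 0 := by
    rw [hJ11]; nlinarith
  refine ⟨hJ01, hJ00, hJ11, hJ00neg, hJ11neg, ?_⟩
  intro μ hμ
  obtain ⟨v, hv⟩ := hμ.exists_hasEigenvector
  have hmem := hv.1
  have hvne := hv.2
  rw [Module.End.mem_eigenspace_iff] at hmem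
  have hmul : J.mulVec v = μ • v := by
    rw [← Matrix.toLin'_apply]; exact hmem
  have h0 : J 0 0 * v 0 + J 0 1 * v 1 = μ * v 0 := by
    have := congrFun hmul 0
    simpa [Matrix.mulVec, dotProduct, Fin.sum_univ_two] using this
  have h1 : J 1 0 * v 0 + J 1 1 * v 1 = μ * v 1 := by
    have := congrFun hmul 1
    simpa [Matrix.mulVec, dotProduct, Fin.sum_univ_two] using this
  by_cases hv0 : v 0 = 0
  · have hv1 : v 1 ≠ 0 := by
      intro hv1
      apply hvne
      funext i
      fin_cases i <;> simpa [hv0, hv1]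
    have : J 1 1 * v 1 = μ * v 1 := by rw [hv0] at h1; linarith [h1]
    have : J 1 1 = μ := mul_right_cancel₀ hv1 this
    linarith
  · have : J 0 0 * v 0 = μ * v 0 := by rw [hJ01] at h0; linarith [h0]
    have : J 0 0 = μ := mul_right_cancel₀ hv0 this
    linarith
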